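/- Every generalized Vandermonde matrix (x_i^{y_j})_{i=1,…,m; j=1,…,n} with 0 < x₁ < ⋯ < x_m and 0 ≤ y₁ < y₂ < ⋯ < y_n (real exponents) is totally positive: all its minors of all orders are positive. -/

import Mathlib

open Real Finset

private lemma expsum_zeros {p : ℕ} : ∀ (y c t : Fin p → ℝ), StrictMono y →
    (∀ i, 0 < t i) → StrictMono t →
    (∀ i, ∑ j, c j * t i ^ y j = 0) → ∀ j, c j = 0 := by
  induction p with
  | zero => intro _ _ _ _ _ _ _ j; exact j.elim0
  | succ p ih =>
    intro y c t hy ht0 ht hsum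
    set g : ℝ → ℝ := fun u => ∑ j, c j * u ^ (y j - y 0) with hg
    set g' : ℝ → ℝ := fun u => ∑ j, c j * ((y j - y 0) * u ^ (y j - y 0 - 1)) with hg'
    have hderiv : ∀ u : ℝ, 0 < u → HasDerivAt g (g' u) u := by
      intro u hu
      exact HasDerivAt.fun_sum fun j _ =>
        (Real.hasDerivAt_rpow_const (Or.inl hu.ne')).const_mul (c j)
    have hgz : ∀ i, g (t i) = 0 := by
      intro i
      have : g (t i) = (∑ j, c j * t i ^ y j) / t i ^ y 0 := by
        rw [Finset.sum_div]
        refine Finset.sum_congr rfl fun j _ => ?_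
        rw [Real.rpow_sub (ht0 i), mul_div_assoc]
      rw [this, hsum i, zero_div]
    have hroll : ∀ i : Fin p, ∃ u ∈ Set.Ioo (t i.castSucc) (t i.succ), g' u = 0 := by
      intro i
      have hlt : t i.castSucc < t i.succ := ht Fin.castSucc_lt_succ
      refine exists_hasDerivAt_eq_zero hlt ?_ ((hgz _).trans (hgz _).symm) ?_
      · intro u hu
        have hu0 : 0 < u := lt_of_lt_of_le (ht0 _) hu.1
        exact (hderiv u hu0).continuousAt.continuousWithinAt
      · intro u hu
        exact hderiv u (lt_trans (ht0 _) hu.1)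
    choose u humem huz using hroll
    have hu0 : ∀ i, 0 < u i := fun i => lt_trans (ht0 _) (humem i).1
    have humono : StrictMono u := by
      intro i j hij
      calc u i < t i.succ := (humem i).2
        _ ≤ t j.castSucc := by
            rcases eq_or_lt_of_le (Fin.succ_le_castSucc_iff.mpr hij) with h | h
            · exact le_of_eq (congrArg t h)
            · exact le_of_lt (ht h)
        _ < u j := (humem j).1
    have hsum' : ∀ i, ∑ j : Fin p,
        (c j.succ * (y j.succ - y 0)) * u i ^ (y j.succ - y 0 - 1) = 0 := by
      intro i
      have := huz i
      rw [hg'] at this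
      simp only [Fin.sum_univ_succ, sub_self, Real.rpow_zero] at this ⊢
      simpa [mul_comm, mul_assoc, mul_left_comm] using this
    have key : ∀ j : Fin p, c j.succ * (y j.succ - y 0) = 0 := by
      refine ih (fun j => y j.succ - y 0 - 1) (fun j => c j.succ * (y j.succ - y 0)) u
        ?_ hu0 humono hsum'
      intro a b hab
      have := hy (Fin.succ_lt_succ_iff.mpr hab)
      show y a.succ - y 0 - 1 < y b.succ - y 0 - 1
      linarith
    have hcs : ∀ j : Fin p, c j.succ = 0 := by
      intro j
      have hy0j : y 0 < y j.succ := hy (Fin.succ_pos j)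
      rcases mul_eq_zero.mp (key j) with h | h
      · exact h
      · linarith
    have hc0 : c 0 = 0 := by
      have := hsum 0
      rw [Fin.sum_univ_succ] at this
      simp only [hcs, zero_mul, Finset.sum_const_zero, add_zero] at this
      have hpos : (0:ℝ) < t 0 ^ y 0 := Real.rpow_pos_of_pos (ht0 0) _
      exact (mul_eq_zero.mp this).resolve_right (ne_of_gt hpos)
    intro j
    exact Fin.cases hc0 hcs j

private lemma gv_det_ne_zero {p : ℕ} (t e : Fin p → ℝ) (ht0 : ∀ i, 0 < t i)
    (ht : StrictMono t) (he : StrictMono e) :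
    Matrix.det (Matrix.of fun a b : Fin p => t a ^ e b) ≠ 0 := by
  intro hdet
  obtain ⟨v, hv, hmul⟩ := (Matrix.exists_mulVec_eq_zero_iff).mpr hdet
  apply hv
  funext j
  refine expsum_zeros e v t he ht0 ht (fun i => ?_) j
  have := congrFun hmul i
  simpa [Matrix.mulVec, dotProduct, mul_comm] using this

theorem generalized_vandermonde_totally_positive
    (m n : ℕ) (x : Fin m → ℝ) (y : Fin n → ℝ)
    (hx0 : ∀ i, 0 < x i) (hx : StrictMono x)
    (hy0 : ∀ j, 0 ≤ y j) (hy : StrictMono y)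
    (p : ℕ) (rows : Fin p → Fin m) (hrows : StrictMono rows)
    (cols : Fin p → Fin n) (hcols : StrictMono cols) :
    0 < Matrix.det (Matrix.of fun a b : Fin p => x (rows a) ^ y (cols b)) := by
  set X : Fin p → ℝ := fun a => x (rows a) with hX
  set E : Fin p → ℝ := fun b => y (cols b) with hE
  have hX0 : ∀ a, 0 < X a := fun a => hx0 _
  have hXm : StrictMono X := hx.comp hrows
  have hEm : StrictMono E := hy.comp hcols
  set F : ℝ → ℝ := fun s =>
    Matrix.det (Matrix.of fun a b : Fin p => X a ^ ((1 - s) * E b + s * (b : ℝ))) with hF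
  -- continuity
  have hFc : Continuous F := by
    apply Continuous.matrix_det
    apply continuous_pi; intro a; apply continuous_pi; intro b
    exact Continuous.rpow continuous_const (by fun_prop)
      (fun s => Or.inl (ne_of_gt (hX0 a)))
  -- never zero on [0,1]
  have hFne : ∀ s ∈ Set.Icc (0:ℝ) 1, F s ≠ 0 := by
    intro s hs
    refine gv_det_ne_zero X (fun b => (1 - s) * E b + s * (b : ℝ)) hX0 hXm ?_
    intro a b hab
    have h1 : E a < E b := hEm hab
    have h2 : (a : ℝ) < (b : ℝ) := by exact_mod_cast hab
    rcases hs with ⟨hs0, hs1⟩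
    show (1 - s) * E a + s * (a : ℝ) < (1 - s) * E b + s * (b : ℝ)
    rcases lt_or_eq_of_le hs1 with h | h
    · nlinarith [mul_pos (by linarith : (0:ℝ) < 1 - s) (sub_pos.mpr h1),
        mul_nonneg hs0 (sub_pos.mpr h2).le]
    · subst h; norm_num; exact hab
  -- value at 1
  have hF1 : 0 < F 1 := by
    have heq : F 1 = (Matrix.vandermonde X).det := by
      simp only [hF]
      congr 1
      funext a b
      show X a ^ ((1 - (1:ℝ)) * E b + 1 * (b : ℝ)) = X a ^ (b : ℕ)
      rw [← Real.rpow_natCast (X a) b]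
      norm_num
    rw [heq, Matrix.det_vandermonde]
    refine Finset.prod_pos fun i _ => Finset.prod_pos fun j hj => ?_
    exact sub_pos.mpr (hXm (Finset.mem_Ioi.mp hj))
  -- value at 0 is the goal
  have hF0 : F 0 = Matrix.det (Matrix.of fun a b : Fin p => x (rows a) ^ y (cols b)) := by
    simp only [hF]
    congr 1
    funext a b
    show X a ^ ((1 - (0:ℝ)) * E b + 0 * (b : ℝ)) = x (rows a) ^ y (cols b)
    norm_num
    rfl
  rw [← hF0]
  by_contra hle
  push_neg at hle
  have hne0 : F 0 ≠ 0 := hFne 0 ⟨le_refl _, zero_le_one⟩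
  have hlt : F 0 < 0 := lt_of_le_of_ne hle hne0
  have : (0:ℝ) ∈ Set.Icc (F 0) (F 1) := ⟨le_of_lt hlt, le_of_lt hF1⟩
  have := intermediate_value_Icc (zero_le_one) hFc.continuousOn this
  obtain ⟨s, hs, hFs⟩ := this
  exact hFne s hs hFs
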